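/- Let W₁,…,W_n be independent identically distributed real random variables with mean 0 and variance σ² < ∞, and let (U₁,…,U_n) be {0,1}-valued random variables, jointly independent of (W₁,…,W_n). Set S = Σ_{m=1}^n U_m. Then E[ 1{S > 0} S^{−2} (Σ_{m=1}^n U_m W_m)² ] = σ² E[ 1{S > 0} / S ]. -/

import Mathlib

open MeasureTheory ProbabilityTheory

/-- conditional-variance identity for the patched estimator.
If `W₁,…,W_n` are i.i.d. with mean `0` and variance `σ²`, and `(U₁,…,U_n)` are
`{0,1}`-valued and jointly independent of `(W₁,…,W_n)`, then with `S = ∑ U_m`,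
`E[1{S>0} S⁻² (∑ U_m W_m)²] = σ² E[1{S>0} / S]`. -/
theorem conditional_variance_identity
    {Ω : Type*} [MeasureSpace Ω] [IsProbabilityMeasure (ℙ : Measure Ω)]
    (n : ℕ) (hn : 0 < n) (W U : Fin n → Ω → ℝ) (σ : ℝ)
    (hWmeas : ∀ m, Measurable (W m))
    (hUmeas : ∀ m, Measurable (U m))
    (hWindep : iIndepFun W ℙ)
    (hWident : ∀ m m', IdentDistrib (W m) (W m') ℙ ℙ)
    (hWint : ∀ m, Integrable (W m) ℙ)
    (hWsq : ∀ m, Integrable (fun ω => (W m ω) ^ 2) ℙ)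
    (hWmean : ∀ m, ∫ ω, W m ω = 0)
    (hWvar : ∀ m, ∫ ω, (W m ω) ^ 2 = σ ^ 2)
    (hU01 : ∀ m ω, U m ω = 0 ∨ U m ω = 1)
    (hWUindep : IndepFun (fun ω (m : Fin n) => W m ω) (fun ω (m : Fin n) => U m ω) ℙ) :
    (∫ ω, if 0 < ∑ m, U m ω then (∑ m, U m ω * W m ω) ^ 2 / (∑ m, U m ω) ^ 2 else 0) =
      σ ^ 2 * ∫ ω, if 0 < ∑ m, U m ω then 1 / (∑ m, U m ω) else 0 := by
  classical
  set XX : Ω → (Fin n → ℝ) := fun ω (m : Fin n) => W m ω with hXX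
  set VV : Ω → (Fin n → ℝ) := fun ω (m : Fin n) => U m ω with hVV
  have hmeasV : Measurable VV := measurable_pi_lambda _ hUmeas
  -- basic data indexed by subsets
  set uT : Finset (Fin n) → (Fin n → ℝ) := fun T m => if m ∈ T then 1 else 0 with huT
  set ψ : Finset (Fin n) → (Fin n → ℝ) → ℝ := fun T => Set.indicator {uT T} 1 with hψdef
  set f : Finset (Fin n) → (Fin n → ℝ) → ℝ :=
    fun T w => (∑ m ∈ T, w m) ^ 2 / ((T.card : ℝ)) ^ 2 with hfdef
  set c : Finset (Fin n) → ℝ := fun T => 1 / (T.card : ℝ) with hcdef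
  have hψm : ∀ T, Measurable (ψ T) := fun T =>
    measurable_const.indicator (measurableSet_singleton _)
  have hfm : ∀ T, Measurable (f T) := by
    intro T
    exact ((Finset.measurable_sum T fun m _ => measurable_pi_apply m).pow measurable_const).div
      measurable_const
  -- products of the W's are integrable
  have hWiWj : ∀ i j, Integrable (fun ω => W i ω * W j ω) ℙ := by
    intro i j
    rcases eq_or_ne i j with rfl | hij
    · simpa [sq] using hWsq i
    · exact (hWindep.indepFun hij).integrable_mul (hWint i) (hWint j)
  have hsumsq_expand : ∀ (T : Finset (Fin n)) (ω : Ω),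
      (∑ m ∈ T, W m ω) ^ 2 = ∑ i ∈ T, ∑ j ∈ T, W i ω * W j ω := by
    intro T ω; rw [sq, Finset.sum_mul_sum]
  have hsumsq_int : ∀ T : Finset (Fin n), Integrable (fun ω => (∑ m ∈ T, W m ω) ^ 2) ℙ := by
    intro T
    simp_rw [hsumsq_expand]
    exact integrable_finset_sum _ fun i _ => integrable_finset_sum _ fun j _ => hWiWj i j
  have hWiWj_int : ∀ i j, (∫ ω, W i ω * W j ω) = if i = j then σ ^ 2 else 0 := by
    intro i j
    rcases eq_or_ne i j with rfl | hij
    · simpa [sq] using hWvar i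
    · have := (hWindep.indepFun hij).integral_mul_eq_mul_integral (hWint i).aestronglyMeasurable (hWint j).aestronglyMeasurable
      simp only [hij, if_neg]
      calc (∫ ω, W i ω * W j ω) = (∫ ω, W i ω) * ∫ ω, W j ω := this
        _ = 0 := by rw [hWmean i, hWmean j]; ring
  have hintsum : ∀ T : Finset (Fin n), (∫ ω, (∑ m ∈ T, W m ω) ^ 2) = T.card * σ ^ 2 := by
    intro T
    simp_rw [hsumsq_expand]
    rw [integral_finset_sum _ fun i _ => integrable_finset_sum _ fun j _ => hWiWj i j]
    have : ∀ i ∈ T, (∫ ω, ∑ j ∈ T, W i ω * W j ω) = σ ^ 2 := by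
      intro i hi
      rw [integral_finset_sum _ fun j _ => hWiWj i j]
      simp_rw [hWiWj_int i]
      simp [Finset.sum_ite_eq, hi]
    rw [Finset.sum_congr rfl this, Finset.sum_const, nsmul_eq_mul]
  -- integral of f T ∘ XX
  have hfX_int : ∀ T, Integrable (fun ω => f T (XX ω)) ℙ := by
    intro T
    have : (fun ω => f T (XX ω)) = fun ω => (∑ m ∈ T, W m ω) ^ 2 / ((T.card : ℝ)) ^ 2 := rfl
    rw [this]
    exact (hsumsq_int T).div_const _
  have hintf : ∀ T, (∫ ω, f T (XX ω)) = σ ^ 2 * c T := by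
    intro T
    have h1 : (∫ ω, f T (XX ω)) = (∫ ω, (∑ m ∈ T, W m ω) ^ 2) / ((T.card : ℝ)) ^ 2 := by
      simp only [hfdef, hXX]
      exact integral_div _ _
    rw [h1, hintsum T, hcdef]
    rcases eq_or_ne ((T.card : ℝ)) 0 with h | h
    · simp [h]
    · field_simp
  -- indicator integrability
  have hψ_eq : ∀ T, (fun ω => ψ T (VV ω)) = Set.indicator (VV ⁻¹' {uT T}) (fun _ => (1:ℝ)) := by
    intro T; funext ω
    simp only [hψdef, Set.indicator, Set.mem_preimage, Set.mem_singleton_iff, Pi.one_apply]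
  have hψ_int : ∀ T, Integrable (fun ω => ψ T (VV ω)) ℙ := by
    intro T
    rw [hψ_eq T]
    exact (integrable_const (1:ℝ)).indicator (hmeasV (measurableSet_singleton _))
  -- independence of composites
  have hIndep : ∀ T, IndepFun (fun ω => f T (XX ω)) (fun ω => ψ T (VV ω)) ℙ := by
    intro T
    exact hWUindep.comp (hfm T) (hψm T)
  have hprod_int : ∀ T, Integrable (fun ω => f T (XX ω) * ψ T (VV ω)) ℙ := by
    intro T
    exact (hIndep T).integrable_mul (hfX_int T) (hψ_int T)
  -- pointwise combinatorics
  have key : ∀ ω : Ω, ∀ T : Finset (Fin n),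
      VV ω = uT T ↔ T = Finset.univ.filter (fun m => U m ω = 1) := by
    intro ω T
    constructor
    · intro h
      ext m
      have hm := congrFun h m
      simp only [hVV, huT] at hm
      by_cases hmT : m ∈ T
      · simp [Finset.mem_filter, hmT] at hm ⊢; exact hm
      · simp [Finset.mem_filter, hmT] at hm ⊢
        intro h1; rw [h1] at hm; norm_num at hm
    · rintro rfl
      funext m
      simp only [hVV, huT, Finset.mem_filter, Finset.mem_univ, true_and]
      rcases hU01 m ω with h | h <;> simp [h]
  have hScard : ∀ ω : Ω, (∑ m, U m ω) = ((Finset.univ.filter (fun m => U m ω = 1)).card : ℝ) := by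
    intro ω
    rw [← Finset.sum_boole]
    refine Finset.sum_congr rfl fun m _ => ?_
    rcases hU01 m ω with h | h <;> simp [h]
  have hSW : ∀ ω : Ω, (∑ m, U m ω * W m ω) = ∑ m ∈ Finset.univ.filter (fun m => U m ω = 1), W m ω := by
    intro ω
    rw [Finset.sum_filter]
    refine Finset.sum_congr rfl fun m _ => ?_
    rcases hU01 m ω with h | h <;> simp [h]
  have hψval : ∀ (ω : Ω) (T : Finset (Fin n)),
      ψ T (VV ω) = if T = Finset.univ.filter (fun m => U m ω = 1) then 1 else 0 := by
    intro ω T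
    simp only [hψdef, Set.indicator, Set.mem_singleton_iff, Pi.one_apply]
    by_cases h : VV ω = uT T
    · rw [if_pos h, if_pos ((key ω T).1 h)]
    · rw [if_neg h, if_neg (fun hc => h (((key ω T).2 hc)))]
  -- decomposition of the integrands
  have hdecL : ∀ ω : Ω,
      (if 0 < ∑ m, U m ω then (∑ m, U m ω * W m ω) ^ 2 / (∑ m, U m ω) ^ 2 else 0)
        = ∑ T : Finset (Fin n), f T (XX ω) * ψ T (VV ω) := by
    intro ω
    set T0 := Finset.univ.filter (fun m => U m ω = 1) with hT0
    rw [Finset.sum_eq_single_of_mem T0 (Finset.mem_univ _)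
      (fun T _ hne => by rw [hψval ω T, if_neg hne, mul_zero])]
    rw [hψval ω T0, if_pos rfl, mul_one]
    by_cases hpos : 0 < ∑ m, U m ω
    · rw [if_pos hpos, hSW ω, hScard ω]
    · rw [if_neg hpos]
      have h0 : ((T0.card : ℝ)) = 0 := by
        have := hScard ω
        have hle : (0:ℝ) ≤ ∑ m, U m ω :=
          Finset.sum_nonneg fun m _ => by rcases hU01 m ω with h | h <;> simp [h]
        have : (∑ m, U m ω) = 0 := le_antisymm (not_lt.mp hpos) hle
        rw [← hScard ω, this]
      simp only [hfdef, hXX, h0]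
      norm_num
  have hdecR : ∀ ω : Ω,
      (if 0 < ∑ m, U m ω then 1 / (∑ m, U m ω) else 0)
        = ∑ T : Finset (Fin n), c T * ψ T (VV ω) := by
    intro ω
    set T0 := Finset.univ.filter (fun m => U m ω = 1) with hT0
    rw [Finset.sum_eq_single_of_mem T0 (Finset.mem_univ _)
      (fun T _ hne => by rw [hψval ω T, if_neg hne, mul_zero])]
    rw [hψval ω T0, if_pos rfl, mul_one]
    by_cases hpos : 0 < ∑ m, U m ω
    · rw [if_pos hpos, hScard ω]
    · rw [if_neg hpos]
      have hle : (0:ℝ) ≤ ∑ m, U m ω :=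
        Finset.sum_nonneg fun m _ => by rcases hU01 m ω with h | h <;> simp [h]
      have hz : (∑ m, U m ω) = 0 := le_antisymm (not_lt.mp hpos) hle
      have h0 : ((T0.card : ℝ)) = 0 := by rw [← hScard ω, hz]
      simp [hcdef, h0]
  -- Now compute both sides
  calc (∫ ω, if 0 < ∑ m, U m ω then (∑ m, U m ω * W m ω) ^ 2 / (∑ m, U m ω) ^ 2 else 0)
      = ∫ ω, ∑ T : Finset (Fin n), f T (XX ω) * ψ T (VV ω) := by
        exact integral_congr_ae (Filter.Eventually.of_forall hdecL)
    _ = ∑ T : Finset (Fin n), ∫ ω, f T (XX ω) * ψ T (VV ω) :=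
        integral_finset_sum _ fun T _ => hprod_int T
    _ = ∑ T : Finset (Fin n), (σ ^ 2 * c T) * ∫ ω, ψ T (VV ω) := by
        refine Finset.sum_congr rfl fun T _ => ?_
        have h := (hIndep T).integral_mul_eq_mul_integral (hfX_int T).aestronglyMeasurable (hψ_int T).aestronglyMeasurable
        show integral ℙ ((fun ω => f T (XX ω)) * fun ω => ψ T (VV ω)) = _
        rw [h, hintf T]
    _ = σ ^ 2 * ∑ T : Finset (Fin n), c T * ∫ ω, ψ T (VV ω) := by
        rw [Finset.mul_sum]; refine Finset.sum_congr rfl fun T _ => ?_; ring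
    _ = σ ^ 2 * ∑ T : Finset (Fin n), ∫ ω, c T * ψ T (VV ω) := by
        refine congrArg _ (Finset.sum_congr rfl fun T _ => ?_)
        rw [integral_const_mul]
    _ = σ ^ 2 * ∫ ω, ∑ T : Finset (Fin n), c T * ψ T (VV ω) := by
        rw [integral_finset_sum _ fun T _ => (hψ_int T).const_mul _]
    _ = σ ^ 2 * ∫ ω, if 0 < ∑ m, U m ω then 1 / (∑ m, U m ω) else 0 := by
        refine congrArg _ (integral_congr_ae (Filter.Eventually.of_forall fun ω => (hdecR ω).symm))
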